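/- Let A be a unital C*-algebra, let φ be a tracial state on A, and let u, v ∈ A be unitaries satisfying u·v = λ·v·u for some complex number λ ≠ 1. Then (1 − |φ(u)|²) + (1 − |φ(v)|²) ≥ 3 − √5. -/

import Mathlib

open scoped ComplexOrder

/-- For a tracial state `φ` on a unital C*-algebra `A` and unitaries
`u, v ∈ A` with `u v = λ v u` for some `λ ≠ 1`, one has
`(1 - |φ u|²) + (1 - |φ v|²) ≥ 3 - √5`. -/
theorem tracial_state_lambda_commuting_unitaries_bound
    {A : Type*} [NormedRing A] [StarRing A] [CStarRing A]
    [NormedAlgebra ℂ A] [CompleteSpace A] [StarModule ℂ A]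
    (φ : A →ₗ[ℂ] ℂ)
    (hφ1 : φ 1 = 1)
    (hφpos : ∀ a : A, 0 ≤ φ (star a * a))
    (hφtr : ∀ a b : A, φ (a * b) = φ (b * a))
    (u v : A)
    (hu₁ : star u * u = 1) (hu₂ : u * star u = 1)
    (hv₁ : star v * v = 1) (hv₂ : v * star v = 1)
    (lam : ℂ) (hlam : lam ≠ 1) (hcomm : u * v = lam • (v * u)) :
    (1 - ‖φ u‖ ^ 2) + (1 - ‖φ v‖ ^ 2) ≥ 3 - Real.sqrt 5 := by
  have hpos : ∀ a : A, 0 ≤ (φ (star a * a)).re ∧ (φ (star a * a)).im = 0 := by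
    intro a
    have h := hφpos a
    rw [Complex.le_def] at h
    exact ⟨by simpa using h.1, by simpa using h.2.symm⟩
  -- φ is star-preserving
  have hstar : ∀ a : A, φ (star a) = (starRingEnd ℂ) (φ a) := by
    intro a
    have e1 : star (a + 1) * (a + 1) = star a * a + star a + a + 1 := by
      simp only [star_add, star_one, add_mul, mul_add, one_mul, mul_one]
      abel
    have e2 : star (a + Complex.I • 1) * (a + Complex.I • 1)
        = star a * a + Complex.I • star a + (-Complex.I) • a + 1 := by
      have hs : star (a + Complex.I • 1) = star a + (-Complex.I) • (1:A) := by
        simp [star_smul, Complex.star_def, Complex.conj_I, neg_smul]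
      rw [hs, add_mul, mul_add, mul_add, smul_mul_assoc, smul_mul_assoc, one_mul,
        mul_smul_comm, mul_one, one_mul, smul_smul, neg_mul, Complex.I_mul_I, neg_neg, one_smul]
      abel
    have h1 := (hpos (a + 1)).2
    have h2 := (hpos (a + Complex.I • 1)).2
    rw [e1] at h1
    rw [e2] at h2
    simp only [map_add, map_smul, hφ1, Complex.add_im, Complex.smul_im, Complex.one_im,
      smul_eq_mul, Complex.mul_im, Complex.I_re, Complex.I_im, Complex.neg_re,
      Complex.neg_im] at h1 h2
    have ha := (hpos a).2
    apply Complex.ext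
    · simp only [Complex.conj_re]; linarith
    · simp only [Complex.conj_im]; linarith
  -- hermitian property of the form
  have hherm : ∀ a b : A, φ (star b * a) = (starRingEnd ℂ) (φ (star a * b)) := by
    intro a b
    rw [← hstar]
    congr 1
    rw [star_mul, star_star]
  -- Cauchy-Schwarz for the positive form (a, b) ↦ φ (star a * b)
  have hcs : ∀ a b : A, Complex.normSq (φ (star a * b))
      ≤ (φ (star a * a)).re * (φ (star b * b)).re := by
    intro a b
    set c := φ (star a * b) with hc
    set P := (φ (star a * a)).re with hP
    set Q := (φ (star b * b)).re with hQ
    have key : ∀ s : ℝ, 0 ≤ P - 2 * s * Complex.normSq c + s ^ 2 * Complex.normSq c * Q := by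
      intro s
      set t : ℂ := (s : ℂ) * (starRingEnd ℂ) c with ht
      have hexp : star (a - t • b) * (a - t • b)
          = star a * a - t • (star a * b) - ((starRingEnd ℂ) t) • (star b * a)
            + ((starRingEnd ℂ) t * t) • (star b * b) := by
        simp only [star_sub, star_smul, sub_mul, mul_sub, smul_mul_assoc,
          mul_smul_comm, smul_sub, smul_smul, Complex.star_def]
        module
      have hx := (hpos (a - t • b)).1
      rw [hexp] at hx
      simp only [map_add, map_sub, map_smul, smul_eq_mul, hherm a b, ← hc] at hx
      simp only [Complex.add_re, Complex.sub_re, Complex.mul_re, Complex.mul_im,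
        Complex.conj_re, Complex.conj_im, Complex.ofReal_re, Complex.ofReal_im, ht,
        ← hP, ← hQ] at hx
      have himb : (φ (star b * b)).im = 0 := (hpos b).2
      rw [himb] at hx
      simp only [Complex.normSq_apply]
      nlinarith [hx]
    rcases eq_or_lt_of_le (hpos b).1 with hQ0 | hQ0
    · -- Q = 0
      rw [← hQ] at hQ0
      have hnc : Complex.normSq c ≤ 0 := by
        by_contra h'
        push_neg at h'
        have hk := key ((P + 1) / (2 * Complex.normSq c))
        rw [← hQ0] at hk
        have h2 : 2 * ((P + 1) / (2 * Complex.normSq c)) * Complex.normSq c = P + 1 := by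
          field_simp
        nlinarith [hk]
      have : Complex.normSq c = 0 := le_antisymm hnc (Complex.normSq_nonneg c)
      rw [this, ← hQ0]
      nlinarith [(hpos a).1]
    · -- Q > 0
      rw [← hQ] at hQ0
      have hk := key (1 / Q)
      have h1 : (1 / Q) ^ 2 * Complex.normSq c * Q = (1 / Q) * Complex.normSq c := by
        field_simp
      rw [h1] at hk
      have h2 : (1 / Q) * Complex.normSq c ≤ P := by linarith
      have h3 := mul_le_mul_of_nonneg_right h2 hQ0.le
      have h4 : (1 / Q) * Complex.normSq c * Q = Complex.normSq c := by
        field_simp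
      linarith [h3, h4.symm.le]
  -- φ (u v) = 0
  have huv : φ (u * v) = 0 := by
    have h1 : φ (u * v) = lam * φ (u * v) := by
      calc φ (u * v) = φ (lam • (v * u)) := by rw [hcomm]
        _ = lam * φ (v * u) := by rw [map_smul, smul_eq_mul]
        _ = lam * φ (u * v) := by rw [hφtr]
    have h2 : (1 - lam) * φ (u * v) = 0 := by linear_combination h1
    rcases mul_eq_zero.mp h2 with h | h
    · exact absurd (by linear_combination -h) hlam
    · exact h
  set α := φ u with hα
  set β := φ v with hβ
  have hsa : star (star u - (starRingEnd ℂ) α • (1:A)) = u - α • 1 := by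
    simp [star_sub, star_smul, star_star, Complex.star_def]
  have hA1 : φ (star (star u - (starRingEnd ℂ) α • (1:A)) * (v - β • 1)) = -(α * β) := by
    rw [hsa]
    simp only [sub_mul, mul_sub, smul_mul_assoc, mul_smul_comm, smul_smul,
      mul_one, one_mul]
    simp only [map_sub, map_smul, smul_eq_mul, hφ1, huv, ← hα, ← hβ]
    ring
  have hA2 : φ (star (star u - (starRingEnd ℂ) α • (1:A)) * (star u - (starRingEnd ℂ) α • (1:A)))
      = 1 - (Complex.normSq α : ℂ) := by
    rw [hsa]
    simp only [sub_mul, mul_sub, smul_mul_assoc, mul_smul_comm, smul_smul,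
      mul_one, one_mul, hu₂]
    simp only [map_sub, map_smul, smul_eq_mul, hφ1, hstar u, ← hα]
    rw [← Complex.mul_conj]
    ring
  have hA3 : φ (star (v - β • (1:A)) * (v - β • 1)) = 1 - (Complex.normSq β : ℂ) := by
    have hsb : star (v - β • (1:A)) = star v - (starRingEnd ℂ) β • 1 := by
      simp [star_sub, star_smul, Complex.star_def]
    rw [hsb]
    simp only [sub_mul, mul_sub, smul_mul_assoc, mul_smul_comm, smul_smul,
      mul_one, one_mul, hv₁]
    simp only [map_sub, map_smul, smul_eq_mul, hφ1, hstar v, ← hβ]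
    rw [← Complex.mul_conj]
    ring
  have hmain := hcs (star u - (starRingEnd ℂ) α • (1:A)) (v - β • (1:A))
  rw [hA1, hA2, hA3] at hmain
  simp only [Complex.normSq_neg, map_mul, Complex.sub_re, Complex.one_re,
    Complex.ofReal_re] at hmain
  have hxy : Complex.normSq α + Complex.normSq β ≤ 1 := by nlinarith [hmain]
  have hs5 : (2:ℝ) ≤ Real.sqrt 5 := by
    nlinarith [Real.sq_sqrt (show (0:ℝ) ≤ 5 by norm_num), Real.sqrt_nonneg 5]
  rw [ge_iff_le]
  rw [Complex.sq_norm, Complex.sq_norm]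
  linarith
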